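/- For every countable ordinal γ ≥ 1 and every ordinal ρ, the ρ-th Cantor–Bendixson derived set of the ordinal space [1, ω^γ] (with order topology) equals { ξ ∈ [1, ω^γ] : ω^ρ divides ξ }, i.e., the set of ordinals of the form ω^ρ · δ with δ ≥ 1 that lie in [1, ω^γ]. In particular, [1, ω^γ]^(γ) = {ω^γ}. -/

import Mathlib

open Topology Ordinal

/-- The `o`-th Cantor–Bendixson derived set of `A`. -/
noncomputable def cbIter {X : Type*} [TopologicalSpace X] (A : Set X) (o : Ordinal) : Set X :=
  Ordinal.limitRecOn o A (fun _ S => {x | AccPt x (Filter.principal S)})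
    (fun o _ ih => ⋂ i : {b : Ordinal // b < o}, ih i.1 i.2)

open Set Filter Set.Notation

lemma cbIter_zero {X : Type*} [TopologicalSpace X] (A : Set X) : cbIter A 0 = A := by
  rw [cbIter, Ordinal.limitRecOn_zero]

lemma cbIter_succ {X : Type*} [TopologicalSpace X] (A : Set X) (o : Ordinal) :
    cbIter A (Order.succ o) = {x | AccPt x (𝓟 (cbIter A o))} := by
  rw [cbIter, Ordinal.limitRecOn_succ]
  rfl

lemma cbIter_limit {X : Type*} [TopologicalSpace X] (A : Set X) {o : Ordinal}
    (h : Order.IsSuccLimit o) : cbIter A o = ⋂ i : {b : Ordinal // b < o}, cbIter A i.1 := by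
  rw [cbIter, Ordinal.limitRecOn_limit _ _ _ _ h]
  rfl

lemma accPt_subtype_isOpen {X : Type*} [TopologicalSpace X] {U : Set X} (hU : IsOpen U)
    {x : X} (hx : x ∈ U) (S : Set X) :
    AccPt x (𝓟 S) ↔ AccPt (⟨x, hx⟩ : U) (𝓟 (U ↓∩ S)) := by
  have hval : (Subtype.val ⁻¹' {x}ᶜ : Set U) = {(⟨x, hx⟩ : U)}ᶜ := by
    ext y
    simp [Subtype.ext_iff]
  have key : (𝓝[≠] (⟨x, hx⟩ : U) ⊓ 𝓟 (U ↓∩ S))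
      = Filter.comap Subtype.val (𝓝[≠] x ⊓ 𝓟 S) := by
    rw [nhdsWithin, nhdsWithin, nhds_subtype_eq_comap, Filter.comap_inf, Filter.comap_inf,
      Filter.comap_principal, Filter.comap_principal, hval]
  constructor
  · intro h
    rw [AccPt, key]
    exact h.comap_of_range_mem <| by
      rw [Subtype.range_coe]
      exact Filter.mem_inf_of_left (mem_nhdsWithin_of_mem_nhds (hU.mem_nhds hx))
  · intro h
    rw [AccPt, key] at h
    have hm : (Filter.map (Subtype.val : U → X)
        (Filter.comap Subtype.val (𝓝[≠] x ⊓ 𝓟 S))).NeBot := h.map Subtype.val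
    exact Filter.neBot_of_le (hf := hm) Filter.map_comap_le

lemma dvd_opow_limit {ρ x : Ordinal} (h : Order.IsSuccLimit ρ) (hd : ∀ b < ρ, ω ^ b ∣ x) :
    ω ^ ρ ∣ x := by
  rw [Ordinal.dvd_iff_mod_eq_zero]
  by_contra hr
  have hmod : x % ω ^ ρ < ω ^ ρ := Ordinal.mod_lt x (opow_ne_zero _ omega0_ne_zero)
  obtain ⟨b, hb, hlt⟩ := (Ordinal.lt_opow_of_isSuccLimit omega0_ne_zero h).mp hmod
  have h2 : ω ^ b ∣ ω ^ ρ * (x / ω ^ ρ) := dvd_mul_of_dvd_left (opow_dvd_opow ω hb.le) _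
  have h3 : ω ^ b ∣ x % ω ^ ρ :=
    (Ordinal.dvd_add_iff h2).mp (by rw [Ordinal.div_add_mod]; exact hd b hb)
  exact hlt.not_ge (Ordinal.le_of_dvd hr h3)

lemma acc_iff_dvd (γ ρ : Ordinal) {x : Ordinal} (hx : x ∈ Set.Icc 1 (ω ^ γ)) :
    AccPt x (𝓟 ({η | ω ^ ρ ∣ η} ∩ Set.Icc 1 (ω ^ γ))) ↔ ω ^ (ρ + 1) ∣ x := by
  have wpos : (0 : Ordinal) < ω ^ ρ := opow_pos ρ omega0_pos
  rw [show AccPt x (𝓟 ({η | ω ^ ρ ∣ η} ∩ Set.Icc 1 (ω ^ γ)))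
      ↔ x.IsAcc ({η | ω ^ ρ ∣ η} ∩ Set.Icc 1 (ω ^ γ)) from Iff.rfl, Ordinal.isAcc_iff]
  constructor
  · rintro ⟨hne, h⟩
    have h1 : ω ^ ρ ∣ x := by
      rw [Ordinal.dvd_iff_mod_eq_zero]
      by_contra hr
      have hlt : ω ^ ρ * (x / ω ^ ρ) < x := by
        conv_rhs => rw [← Ordinal.div_add_mod x (ω ^ ρ)]
        exact lt_add_of_pos_right _ (pos_iff_ne_zero.2 hr)
      obtain ⟨s, ⟨⟨m, rfl⟩, _⟩, hs1, hs2⟩ := h _ hlt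
      have hm : x / ω ^ ρ < m := (mul_lt_mul_iff_of_pos_left wpos).mp hs1
      have : x < ω ^ ρ * m := by
        calc x = ω ^ ρ * (x / ω ^ ρ) + x % ω ^ ρ := (Ordinal.div_add_mod x (ω ^ ρ)).symm
        _ < ω ^ ρ * (x / ω ^ ρ) + ω ^ ρ := by
              exact add_lt_add_right (Ordinal.mod_lt x wpos.ne') _
        _ = ω ^ ρ * (x / ω ^ ρ + 1) := by rw [mul_add, mul_one]
        _ ≤ ω ^ ρ * m := by
              apply mul_le_mul_right
              rwa [Ordinal.add_one_eq_succ, Order.succ_le_iff]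
      exact absurd hs2 this.not_gt
    obtain ⟨q, rfl⟩ := h1
    have hq0 : q ≠ 0 := by rintro rfl; simp at hne
    have hqlim : Order.IsSuccLimit q := by
      by_contra hql
      obtain ⟨q', rfl⟩ := ((Ordinal.zero_or_succ_or_isSuccLimit q).resolve_left hq0).resolve_right hql
      have hp : ω ^ ρ * q' < ω ^ ρ * Order.succ q' :=
        (mul_lt_mul_iff_of_pos_left wpos).mpr (Order.lt_succ q')
      obtain ⟨s, ⟨⟨m, rfl⟩, _⟩, hs1, hs2⟩ := h _ hp
      have h2 : q' < m := (mul_lt_mul_iff_of_pos_left wpos).mp hs1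
      have h3 : m < Order.succ q' := (mul_lt_mul_iff_of_pos_left wpos).mp hs2
      exact h3.not_ge (Order.succ_le_of_lt h2)
    obtain ⟨k, rfl⟩ := (Ordinal.isSuccLimit_iff_omega0_dvd.mp hqlim).2
    exact ⟨k, by rw [opow_add, opow_one, mul_assoc]⟩
  · rintro ⟨c, rfl⟩
    have hc0 : c ≠ 0 := by
      rintro rfl
      have := hx.1
      simp at this
    have hx' : ω ^ (ρ + 1) * c = ω ^ ρ * (ω * c) := by
      rw [opow_add, opow_one, mul_assoc]
    have hlim : Order.IsSuccLimit (ω * c) :=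
      Ordinal.isSuccLimit_iff_omega0_dvd.mpr ⟨mul_ne_zero omega0_ne_zero hc0, ⟨c, rfl⟩⟩
    refine ⟨mul_ne_zero (opow_ne_zero _ omega0_ne_zero) hc0, fun p hp => ?_⟩
    rw [hx', Ordinal.lt_mul_iff_of_isSuccLimit hlim] at hp
    obtain ⟨d, hd, hpd⟩ := hp
    have hlt : ω ^ ρ * max d 1 < ω ^ (ρ + 1) * c := by
      rw [hx']
      exact (mul_lt_mul_iff_of_pos_left wpos).mpr (max_lt hd (Ordinal.one_lt_of_isSuccLimit hlim))
    refine ⟨ω ^ ρ * max d 1, ⟨⟨⟨max d 1, rfl⟩, ?_, hlt.le.trans hx.2⟩, ?_, hlt⟩⟩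
    · rw [Order.one_le_iff_pos]
      exact mul_pos wpos (lt_of_lt_of_le zero_lt_one (le_max_right d 1))
    · exact lt_of_lt_of_le hpd (mul_le_mul_right (le_max_left d 1) _)

lemma cbIter_eq_dvd (γ : Ordinal) (ρ : Ordinal) :
    cbIter (Set.univ : Set ↥(Set.Icc (1 : Ordinal) (ω ^ γ))) ρ
      = {ξ : ↥(Set.Icc (1 : Ordinal) (ω ^ γ)) | ω ^ ρ ∣ (ξ : Ordinal)} := by
  have hUopen : IsOpen (Set.Icc (1 : Ordinal) (ω ^ γ)) := by
    have he : Set.Icc (1 : Ordinal) (ω ^ γ) = Set.Ioo 0 (ω ^ γ + 1) := by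
      ext z
      simp [Order.one_le_iff_pos, Order.lt_add_one_iff]
    rw [he]
    exact isOpen_Ioo
  induction ρ using Ordinal.limitRecOn with
  | zero =>
      rw [cbIter_zero]
      ext ξ
      simp
  | add_one o ih =>
      rw [Ordinal.add_one_eq_succ, cbIter_succ, ih]
      ext ξ
      obtain ⟨x, hxm⟩ := ξ
      have hset : {η : ↥(Set.Icc (1 : Ordinal) (ω ^ γ)) | ω ^ o ∣ (η : Ordinal)}
          = (Set.Icc (1 : Ordinal) (ω ^ γ)) ↓∩ ({η | ω ^ o ∣ η} ∩ Set.Icc 1 (ω ^ γ)) := by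
        ext η
        simp [η.2]
      simp only [Set.mem_setOf_eq, hset]
      rw [← accPt_subtype_isOpen hUopen hxm, acc_iff_dvd γ o hxm, Ordinal.add_one_eq_succ]
  | limit o ho ih =>
      rw [cbIter_limit _ ho]
      ext ξ
      simp only [Set.mem_iInter, Set.mem_setOf_eq]
      constructor
      · intro h
        refine dvd_opow_limit ho fun b hb => ?_
        have := h ⟨b, hb⟩
        rwa [ih b hb] at this
      · intro h i
        rw [ih i.1 i.2]
        exact (opow_dvd_opow ω i.2.le).trans h

/-- For a countable ordinal `γ ≥ 1` and any ordinal `ρ`, the `ρ`-th Cantor–Bendixson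
derived set of `[1, ω^γ]` is the set of points divisible by `ω^ρ`; in particular the
`γ`-th derived set is `{ω^γ}`. -/
theorem stmt1 (γ : Ordinal) (hγ1 : 1 ≤ γ) (hγc : γ.card ≤ Cardinal.aleph0) (ρ : Ordinal) :
    cbIter (Set.univ : Set ↥(Set.Icc (1 : Ordinal) (ω ^ γ))) ρ
        = {ξ : ↥(Set.Icc (1 : Ordinal) (ω ^ γ)) | ω ^ ρ ∣ (ξ : Ordinal)} ∧
      cbIter (Set.univ : Set ↥(Set.Icc (1 : Ordinal) (ω ^ γ))) γ
        = {ξ : ↥(Set.Icc (1 : Ordinal) (ω ^ γ)) | (ξ : Ordinal) = ω ^ γ} := by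
  have wpos : (0 : Ordinal) < ω ^ γ := opow_pos γ omega0_pos
  refine ⟨cbIter_eq_dvd γ ρ, ?_⟩
  rw [cbIter_eq_dvd γ γ]
  ext ξ
  simp only [Set.mem_setOf_eq]
  constructor
  · rintro ⟨c, hc⟩
    have h1 := ξ.2.1
    have h2 := ξ.2.2
    have hc1 : c ≠ 0 := by
      rintro rfl
      rw [mul_zero] at hc
      rw [hc] at h1
      simp at h1
    have hcle : c ≤ 1 := by
      by_contra hgt
      push_neg at hgt
      have : ω ^ γ * 1 < ω ^ γ * c := (mul_lt_mul_iff_of_pos_left wpos).mpr hgt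
      rw [mul_one] at this
      rw [hc] at h2
      exact absurd h2 this.not_ge
    have hc' : c = 1 :=
      le_antisymm hcle (Order.one_le_iff_pos.mpr (pos_iff_ne_zero.2 hc1))
    rw [hc, hc', mul_one]
  · intro h
    rw [h]
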